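/- (Equivalence of the δ-RPDE with the RPDE under exponential substitution.) Fix integers n, m and δ ∈ ℝ with δ ≠ 0. Let U be a four times continuously differentiable real function on an open set D ⊆ ℝ² where α ≠ β, ∂U/∂α ≠ 0 and ∂U/∂β ≠ 0, and define Ũ := exp(2δU)/(2δ). Then U satisfies the δ-RPDE R(α,β,U;n,m) + 2δ²·U_α·U_β·(2·U_{αβ} − (U_α − U_β)/(α−β)) = 0 on D if and only if Ũ satisfies R(α,β,Ũ;n,m) = 0 on D. -/

import Mathlib

/-- Partial derivative with respect to the first variable. -/
noncomputable def pda (f : ℝ × ℝ → ℝ) (p : ℝ × ℝ) : ℝ :=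
  deriv (fun x => f (x, p.2)) p.1

/-- Partial derivative with respect to the second variable. -/
noncomputable def pdb (f : ℝ × ℝ → ℝ) (p : ℝ × ℝ) : ℝ :=
  deriv (fun y => f (p.1, y)) p.2

/-- The RPDE expression R(α,β,U;n,m). -/
noncomputable def Rexpr (n m : ℤ) (U : ℝ × ℝ → ℝ) (p : ℝ × ℝ) : ℝ :=
  let s := p.1 - p.2
  let Ua := pda U p
  let Ub := pdb U p
  let Uaa := pda (pda U) p
  let Uab := pdb (pda U) p
  let Ubb := pdb (pdb U) p
  let Uaab := pdb (pda (pda U)) p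
  let Uabb := pdb (pdb (pda U)) p
  let Uaabb := pdb (pdb (pda (pda U))) p ;
  (-Uaabb
    + Uaab * (1 / s + Ubb / Ub + Uab / Ua)
    + Uabb * (1 / (-s) + Uaa / Ua + Uab / Ub)
    - Uaa * Ubb * Uab / (Ua * Ub)
    + Uaa * ((n : ℝ) ^ 2 * Ub ^ 2 / (s ^ 2 * Ua ^ 2) - Uab / (s * Ua) - Uab ^ 2 / Ua ^ 2)
    + Ubb * ((m : ℝ) ^ 2 * Ua ^ 2 / (s ^ 2 * Ub ^ 2) + Uab / (s * Ub) - Uab ^ 2 / Ub ^ 2)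
    + ((n : ℝ) ^ 2 / (2 * s ^ 3)) * (Ub / Ua) * (Ua + Ub + 2 * (-s) * Uab)
    - ((m : ℝ) ^ 2 / (2 * s ^ 3)) * (Ua / Ub) * (Ua + Ub + 2 * s * Uab)
    + (1 / (2 * s)) * Uab ^ 2 * (1 / Ua - 1 / Ub))

open Filter

private lemma hasDerivAt_sliceA {g : ℝ × ℝ → ℝ} {p : ℝ × ℝ}
    (hg : DifferentiableAt ℝ g p) :
    HasDerivAt (fun x => g (x, p.2)) (fderiv ℝ g p (1, 0)) p.1 := by
  have h1 : HasDerivAt (fun x : ℝ => (x, p.2)) ((1 : ℝ), (0 : ℝ)) p.1 :=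
    (hasDerivAt_id p.1).prodMk (hasDerivAt_const _ _)
  have h2 : HasFDerivAt g (fderiv ℝ g p) (p.1, p.2) := by
    simpa using hg.hasFDerivAt
  exact HasFDerivAt.comp_hasDerivAt p.1 h2 h1

private lemma hasDerivAt_sliceB {g : ℝ × ℝ → ℝ} {p : ℝ × ℝ}
    (hg : DifferentiableAt ℝ g p) :
    HasDerivAt (fun y => g (p.1, y)) (fderiv ℝ g p (0, 1)) p.2 := by
  have h1 : HasDerivAt (fun y : ℝ => (p.1, y)) ((0 : ℝ), (1 : ℝ)) p.2 :=
    (hasDerivAt_const _ _).prodMk (hasDerivAt_id p.2)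
  have h2 : HasFDerivAt g (fderiv ℝ g p) (p.1, p.2) := by
    simpa using hg.hasFDerivAt
  exact HasFDerivAt.comp_hasDerivAt p.2 h2 h1

private lemma sliceA {D : Set (ℝ × ℝ)} (hD : IsOpen D) {f g : ℝ × ℝ → ℝ}
    (hfg : ∀ q ∈ D, f q = g q) {p : ℝ × ℝ} (hp : p ∈ D) {c : ℝ}
    (hg : HasDerivAt (fun x => g (x, p.2)) c p.1) :
    pda f p = c ∧ HasDerivAt (fun x => f (x, p.2)) (pda f p) p.1 := by
  have hev : (fun x => f (x, p.2)) =ᶠ[nhds p.1] (fun x => g (x, p.2)) := by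
    have hopen : IsOpen {x : ℝ | (x, p.2) ∈ D} :=
      hD.preimage (continuous_id.prodMk continuous_const)
    have hmem : p.1 ∈ {x : ℝ | (x, p.2) ∈ D} := by simpa using hp
    filter_upwards [hopen.mem_nhds hmem] with x hx using hfg _ hx
  have h := hg.congr_of_eventuallyEq hev
  exact ⟨h.deriv, h.differentiableAt.hasDerivAt⟩

private lemma sliceB {D : Set (ℝ × ℝ)} (hD : IsOpen D) {f g : ℝ × ℝ → ℝ}
    (hfg : ∀ q ∈ D, f q = g q) {p : ℝ × ℝ} (hp : p ∈ D) {c : ℝ}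
    (hg : HasDerivAt (fun y => g (p.1, y)) c p.2) :
    pdb f p = c ∧ HasDerivAt (fun y => f (p.1, y)) (pdb f p) p.2 := by
  have hev : (fun y => f (p.1, y)) =ᶠ[nhds p.2] (fun y => g (p.1, y)) := by
    have hopen : IsOpen {y : ℝ | (p.1, y) ∈ D} :=
      hD.preimage (continuous_const.prodMk continuous_id)
    have hmem : p.2 ∈ {y : ℝ | (p.1, y) ∈ D} := by simpa using hp
    filter_upwards [hopen.mem_nhds hmem] with y hy using hfg _ hy
  have h := hg.congr_of_eventuallyEq hev
  exact ⟨h.deriv, h.differentiableAt.hasDerivAt⟩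

set_option maxHeartbeats 4000000 in
private lemma key_alg (n m : ℤ) (δ E s ua ub uaa uab ubb uaab uabb uaabb : ℝ)
    (hs : s ≠ 0) (hua : ua ≠ 0) (hub : ub ≠ 0) (hE : E ≠ 0) (hδ : δ ≠ 0) :
    (-(E * (8*δ^3*ua^2*ub^2 + 4*δ^2*uaa*ub^2 + 16*δ^2*ua*ub*uab + 4*δ^2*ua^2*ubb + 4*δ*ub*uaab + 2*δ*uaa*ubb + 4*δ*uab^2 + 4*δ*ua*uabb + uaabb))
      + (E * (2*δ*ub*(2*δ*ua^2+uaa) + 4*δ*(ua*uab) + uaab)) * (1 / s + (E * (2*δ*ub^2 + ubb)) / (E * ub) + (E * (2*δ*ua*ub + uab)) / (E * ua))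
      + (E * (2*δ*ub*(2*δ*ua*ub+uab) + 2*δ*(uab*ub + ua*ubb) + uabb)) * (1 / (-s) + (E * (2*δ*ua^2 + uaa)) / (E * ua) + (E * (2*δ*ua*ub + uab)) / (E * ub))
      - (E * (2*δ*ua^2 + uaa)) * (E * (2*δ*ub^2 + ubb)) * (E * (2*δ*ua*ub + uab)) / ((E * ua) * (E * ub))
      + (E * (2*δ*ua^2 + uaa)) * ((n : ℝ) ^ 2 * (E * ub) ^ 2 / (s ^ 2 * (E * ua) ^ 2) - (E * (2*δ*ua*ub + uab)) / (s * (E * ua)) - (E * (2*δ*ua*ub + uab)) ^ 2 / (E * ua) ^ 2)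
      + (E * (2*δ*ub^2 + ubb)) * ((m : ℝ) ^ 2 * (E * ua) ^ 2 / (s ^ 2 * (E * ub) ^ 2) + (E * (2*δ*ua*ub + uab)) / (s * (E * ub)) - (E * (2*δ*ua*ub + uab)) ^ 2 / (E * ub) ^ 2)
      + ((n : ℝ) ^ 2 / (2 * s ^ 3)) * ((E * ub) / (E * ua)) * ((E * ua) + (E * ub) + 2 * (-s) * (E * (2*δ*ua*ub + uab)))
      - ((m : ℝ) ^ 2 / (2 * s ^ 3)) * ((E * ua) / (E * ub)) * ((E * ua) + (E * ub) + 2 * s * (E * (2*δ*ua*ub + uab)))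
      + (1 / (2 * s)) * (E * (2*δ*ua*ub + uab)) ^ 2 * (1 / (E * ua) - 1 / (E * ub))) =
    E * ((-uaabb
      + uaab * (1 / s + ubb / ub + uab / ua)
      + uabb * (1 / (-s) + uaa / ua + uab / ub)
      - uaa * ubb * uab / (ua * ub)
      + uaa * ((n : ℝ) ^ 2 * ub ^ 2 / (s ^ 2 * ua ^ 2) - uab / (s * ua) - uab ^ 2 / ua ^ 2)
      + ubb * ((m : ℝ) ^ 2 * ua ^ 2 / (s ^ 2 * ub ^ 2) + uab / (s * ub) - uab ^ 2 / ub ^ 2)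
      + ((n : ℝ) ^ 2 / (2 * s ^ 3)) * (ub / ua) * (ua + ub + 2 * (-s) * uab)
      - ((m : ℝ) ^ 2 / (2 * s ^ 3)) * (ua / ub) * (ua + ub + 2 * s * uab)
      + (1 / (2 * s)) * uab ^ 2 * (1 / ua - 1 / ub))
      + 2 * δ ^ 2 * ua * ub * (2 * uab - (ua - ub) / s)) := by
  have hEua : E * ua ≠ 0 := mul_ne_zero hE hua
  have hEub : E * ub ≠ 0 := mul_ne_zero hE hub
  field_simp
  have hs' : s ^ 29 * s⁻¹ = s ^ 28 := by
    rw [pow_succ, mul_assoc, mul_inv_cancel₀ hs, mul_one]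
  linear_combination

set_option maxHeartbeats 4000000 in
/-- Equivalence of the δ-RPDE with the RPDE under the exponential substitution
Ũ = exp(2δU)/(2δ). -/
theorem deltaRPDE_iff_RPDE_exp
    (n m : ℤ) (δ : ℝ) (hδ : δ ≠ 0) (U : ℝ × ℝ → ℝ)
    (D : Set (ℝ × ℝ)) (hD : IsOpen D)
    (hαβ : ∀ p ∈ D, p.1 ≠ p.2)
    (hUa : ∀ p ∈ D, pda U p ≠ 0) (hUb : ∀ p ∈ D, pdb U p ≠ 0)
    (hU : ContDiffOn ℝ 4 U D) :
    (∀ p ∈ D, Rexpr n m U p + 2 * δ ^ 2 * pda U p * pdb U p *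
        (2 * pdb (pda U) p - (pda U p - pdb U p) / (p.1 - p.2)) = 0) ↔
    (∀ p ∈ D, Rexpr n m (fun q => Real.exp (2 * δ * U q) / (2 * δ)) p = 0) := by
  set V : ℝ × ℝ → ℝ := fun q => Real.exp (2 * δ * U q) / (2 * δ) with hVdef
  -- differentiability ladder
  have hUd : ∀ q ∈ D, DifferentiableAt ℝ U q := fun q hq =>
    (hU.differentiableOn (by norm_num)).differentiableAt (hD.mem_nhds hq)
  set A1 : ℝ × ℝ → ℝ := fun q => fderiv ℝ U q (1, 0) with hA1
  set B1 : ℝ × ℝ → ℝ := fun q => fderiv ℝ U q (0, 1) with hB1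
  have cA1 : ContDiffOn ℝ 3 A1 D :=
    (hU.fderiv_of_isOpen hD (by norm_num)).clm_apply contDiffOn_const
  have cB1 : ContDiffOn ℝ 3 B1 D :=
    (hU.fderiv_of_isOpen hD (by norm_num)).clm_apply contDiffOn_const
  have dA1 : ∀ q ∈ D, DifferentiableAt ℝ A1 q := fun q hq =>
    (cA1.differentiableOn (by norm_num)).differentiableAt (hD.mem_nhds hq)
  have dB1 : ∀ q ∈ D, DifferentiableAt ℝ B1 q := fun q hq =>
    (cB1.differentiableOn (by norm_num)).differentiableAt (hD.mem_nhds hq)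
  set A2 : ℝ × ℝ → ℝ := fun q => fderiv ℝ A1 q (1, 0) with hA2
  set AB : ℝ × ℝ → ℝ := fun q => fderiv ℝ A1 q (0, 1) with hAB
  set B2 : ℝ × ℝ → ℝ := fun q => fderiv ℝ B1 q (0, 1) with hB2
  have cA2 : ContDiffOn ℝ 2 A2 D :=
    (cA1.fderiv_of_isOpen hD (by norm_num)).clm_apply contDiffOn_const
  have cAB : ContDiffOn ℝ 2 AB D :=
    (cA1.fderiv_of_isOpen hD (by norm_num)).clm_apply contDiffOn_const
  have dA2 : ∀ q ∈ D, DifferentiableAt ℝ A2 q := fun q hq =>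
    (cA2.differentiableOn (by norm_num)).differentiableAt (hD.mem_nhds hq)
  have dAB : ∀ q ∈ D, DifferentiableAt ℝ AB q := fun q hq =>
    (cAB.differentiableOn (by norm_num)).differentiableAt (hD.mem_nhds hq)
  set A2B : ℝ × ℝ → ℝ := fun q => fderiv ℝ A2 q (0, 1) with hA2B
  have cA2B : ContDiffOn ℝ 1 A2B D :=
    (cA2.fderiv_of_isOpen hD (by norm_num)).clm_apply contDiffOn_const
  have dA2B : ∀ q ∈ D, DifferentiableAt ℝ A2B q := fun q hq =>
    (cA2B.differentiableOn (by norm_num)).differentiableAt (hD.mem_nhds hq)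
  -- equalities of partial derivatives with fderiv forms, on D
  have eA1 : ∀ q ∈ D, pda U q = A1 q := fun q hq =>
    (sliceA hD (fun _ _ => rfl) hq (hasDerivAt_sliceA (hUd q hq))).1
  have eB1 : ∀ q ∈ D, pdb U q = B1 q := fun q hq =>
    (sliceB hD (fun _ _ => rfl) hq (hasDerivAt_sliceB (hUd q hq))).1
  have eA2 : ∀ q ∈ D, pda (pda U) q = A2 q := fun q hq =>
    (sliceA hD eA1 hq (hasDerivAt_sliceA (dA1 q hq))).1
  have eAB : ∀ q ∈ D, pdb (pda U) q = AB q := fun q hq =>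
    (sliceB hD eA1 hq (hasDerivAt_sliceB (dA1 q hq))).1
  have eA2B : ∀ q ∈ D, pdb (pda (pda U)) q = A2B q := fun q hq =>
    (sliceB hD eA2 hq (hasDerivAt_sliceB (dA2 q hq))).1
  -- slice HasDerivAt facts for U and its partial derivatives
  have sUa : ∀ q ∈ D, HasDerivAt (fun x => U (x, q.2)) (pda U q) q.1 := fun q hq =>
    (sliceA hD (fun _ _ => rfl) hq (hasDerivAt_sliceA (hUd q hq))).2
  have sUb : ∀ q ∈ D, HasDerivAt (fun y => U (q.1, y)) (pdb U q) q.2 := fun q hq =>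
    (sliceB hD (fun _ _ => rfl) hq (hasDerivAt_sliceB (hUd q hq))).2
  have sUa_a : ∀ q ∈ D, HasDerivAt (fun x => pda U (x, q.2)) (pda (pda U) q) q.1 := fun q hq =>
    (sliceA hD eA1 hq (hasDerivAt_sliceA (dA1 q hq))).2
  have sUb_a : ∀ q ∈ D, HasDerivAt (fun y => pda U (q.1, y)) (pdb (pda U) q) q.2 := fun q hq =>
    (sliceB hD eA1 hq (hasDerivAt_sliceB (dA1 q hq))).2
  have sUb_b : ∀ q ∈ D, HasDerivAt (fun y => pdb U (q.1, y)) (pdb (pdb U) q) q.2 := fun q hq =>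
    (sliceB hD eB1 hq (hasDerivAt_sliceB (dB1 q hq))).2
  have sA2_b : ∀ q ∈ D,
      HasDerivAt (fun y => pda (pda U) (q.1, y)) (pdb (pda (pda U)) q) q.2 := fun q hq =>
    (sliceB hD eA2 hq (hasDerivAt_sliceB (dA2 q hq))).2
  have sAB_b : ∀ q ∈ D,
      HasDerivAt (fun y => pdb (pda U) (q.1, y)) (pdb (pdb (pda U)) q) q.2 := fun q hq =>
    (sliceB hD eAB hq (hasDerivAt_sliceB (dAB q hq))).2
  have sA2B_b : ∀ q ∈ D,
      HasDerivAt (fun y => pdb (pda (pda U)) (q.1, y)) (pdb (pdb (pda (pda U))) q) q.2 :=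
    fun q hq => (sliceB hD eA2B hq (hasDerivAt_sliceB (dA2B q hq))).2
  -- exponential slice derivatives
  have hexp_a : ∀ q ∈ D, HasDerivAt (fun x => Real.exp (2 * δ * U (x, q.2)))
      (Real.exp (2 * δ * U q) * (2 * δ * pda U q)) q.1 := by
    intro q hq
    have h := ((sUa q hq).const_mul (2 * δ)).exp
    simpa using h
  have hexp_b : ∀ q ∈ D, HasDerivAt (fun y => Real.exp (2 * δ * U (q.1, y)))
      (Real.exp (2 * δ * U q) * (2 * δ * pdb U q)) q.2 := by
    intro q hq
    have h := ((sUb q hq).const_mul (2 * δ)).exp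
    simpa using h
  -- first derivatives of V
  have eVa : ∀ q ∈ D, pda V q = Real.exp (2 * δ * U q) * pda U q := by
    intro q hq
    have hg : HasDerivAt (fun x => V (x, q.2))
        (Real.exp (2 * δ * U q) * (2 * δ * pda U q) / (2 * δ)) q.1 :=
      (hexp_a q hq).div_const (2 * δ)
    have h := (sliceA hD (fun _ _ => rfl) hq hg).1
    rw [h]; field_simp
  have eVb : ∀ q ∈ D, pdb V q = Real.exp (2 * δ * U q) * pdb U q := by
    intro q hq
    have hg : HasDerivAt (fun y => V (q.1, y))
        (Real.exp (2 * δ * U q) * (2 * δ * pdb U q) / (2 * δ)) q.2 :=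
      (hexp_b q hq).div_const (2 * δ)
    have h := (sliceB hD (fun _ _ => rfl) hq hg).1
    rw [h]; field_simp
  -- second derivatives of V
  have eVaa : ∀ q ∈ D, pda (pda V) q =
      Real.exp (2 * δ * U q) * (2 * δ * (pda U q) ^ 2 + pda (pda U) q) := by
    intro q hq
    have hg := (hexp_a q hq).mul (sUa_a q hq)
    have h := (sliceA hD eVa hq hg).1
    rw [h]; simp only [Prod.mk.eta]; ring
  have eVab : ∀ q ∈ D, pdb (pda V) q =
      Real.exp (2 * δ * U q) * (2 * δ * pda U q * pdb U q + pdb (pda U) q) := by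
    intro q hq
    have hg := (hexp_b q hq).mul (sUb_a q hq)
    have h := (sliceB hD eVa hq hg).1
    rw [h]; simp only [Prod.mk.eta]; ring
  have eVbb : ∀ q ∈ D, pdb (pdb V) q =
      Real.exp (2 * δ * U q) * (2 * δ * (pdb U q) ^ 2 + pdb (pdb U) q) := by
    intro q hq
    have hg := (hexp_b q hq).mul (sUb_b q hq)
    have h := (sliceB hD eVb hq hg).1
    rw [h]; simp only [Prod.mk.eta]; ring
  -- third derivatives of V
  have eVaab : ∀ q ∈ D, pdb (pda (pda V)) q = Real.exp (2 * δ * U q) *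
      (2 * δ * pdb U q * (2 * δ * (pda U q) ^ 2 + pda (pda U) q)
        + 4 * δ * (pda U q * pdb (pda U) q) + pdb (pda (pda U)) q) := by
    intro q hq
    have hinner := ((((sUb_a q hq).pow 2).const_mul (2 * δ)).add (sA2_b q hq))
    have hg := (hexp_b q hq).mul hinner
    have h := (sliceB hD eVaa hq hg).1
    rw [h]; simp only [Prod.mk.eta, Pi.add_apply, Pi.mul_apply, Pi.pow_apply]; ring
  have eVabb : ∀ q ∈ D, pdb (pdb (pda V)) q = Real.exp (2 * δ * U q) *
      (2 * δ * pdb U q * (2 * δ * pda U q * pdb U q + pdb (pda U) q)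
        + 2 * δ * (pdb (pda U) q * pdb U q + pda U q * pdb (pdb U) q)
        + pdb (pdb (pda U)) q) := by
    intro q hq
    have hinner := ((((sUb_a q hq).const_mul (2 * δ)).mul (sUb_b q hq)).add (sAB_b q hq))
    have hg := (hexp_b q hq).mul hinner
    have h := (sliceB hD eVab hq hg).1
    rw [h]; simp only [Prod.mk.eta, Pi.add_apply, Pi.mul_apply, Pi.pow_apply]; ring
  -- fourth derivative of V
  have eVaabb : ∀ p ∈ D, pdb (pdb (pda (pda V))) p = Real.exp (2 * δ * U p) *
      (8 * δ ^ 3 * (pda U p) ^ 2 * (pdb U p) ^ 2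
        + 4 * δ ^ 2 * pda (pda U) p * (pdb U p) ^ 2
        + 16 * δ ^ 2 * pda U p * pdb U p * pdb (pda U) p
        + 4 * δ ^ 2 * (pda U p) ^ 2 * pdb (pdb U) p
        + 4 * δ * pdb U p * pdb (pda (pda U)) p
        + 2 * δ * pda (pda U) p * pdb (pdb U) p
        + 4 * δ * (pdb (pda U) p) ^ 2
        + 4 * δ * pda U p * pdb (pdb (pda U)) p
        + pdb (pdb (pda (pda U))) p) := by
    intro p hp
    have t1 := ((sUb_b p hp).const_mul (2 * δ)).mul
      ((((sUb_a p hp).pow 2).const_mul (2 * δ)).add (sA2_b p hp))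
    have t2 := (((sUb_a p hp).mul (sAB_b p hp)).const_mul (4 * δ))
    have hinner := (t1.add t2).add (sA2B_b p hp)
    have hg := (hexp_b p hp).mul hinner
    have h := (sliceB hD eVaab hp hg).1
    rw [h]; simp only [Prod.mk.eta, Pi.add_apply, Pi.mul_apply, Pi.pow_apply]; ring
  -- the key pointwise identity
  have key : ∀ p ∈ D, Rexpr n m V p = Real.exp (2 * δ * U p) *
      (Rexpr n m U p + 2 * δ ^ 2 * pda U p * pdb U p *
        (2 * pdb (pda U) p - (pda U p - pdb U p) / (p.1 - p.2))) := by
    intro p hp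
    have hs : p.1 - p.2 ≠ 0 := sub_ne_zero.mpr (hαβ p hp)
    have hE : Real.exp (2 * δ * U p) ≠ 0 := Real.exp_ne_zero _
    have h1 := hUa p hp
    have h2 := hUb p hp
    simp only [Rexpr]
    rw [eVa p hp, eVb p hp, eVaa p hp, eVab p hp, eVbb p hp, eVaab p hp, eVabb p hp,
      eVaabb p hp]
    linear_combination key_alg n m δ (Real.exp (2 * δ * U p)) (p.1 - p.2) (pda U p)
      (pdb U p) (pda (pda U) p) (pdb (pda U) p) (pdb (pdb U) p) (pdb (pda (pda U)) p)
      (pdb (pdb (pda U)) p) (pdb (pdb (pda (pda U))) p) hs h1 h2 hE hδ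
  constructor
  · intro h p hp
    rw [key p hp, h p hp, mul_zero]
  · intro h p hp
    have h0 := h p hp
    rw [key p hp] at h0
    rcases mul_eq_zero.mp h0 with h' | h'
    · exact absurd h' (Real.exp_ne_zero _)
    · exact h'
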